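/- There is an isomorphism of finite quadratic forms u ⊕ u ≅ v ⊕ v, where u is the discriminant quadratic form of U(2) and v is the discriminant quadratic form of D4. -/
import Mathlib

noncomputable section

/-- The quadratic form `u ⊕ u` over `F₂`: two orthogonal copies of the
discriminant quadratic form of `U(2)` (hyperbolic plane: `q(e)=q(f)=0`,
`q(e+f)=1`).  Its values lie in `ℤ/2 ⊂ ℚ/2ℤ`. -/
def qUU : (Fin 4 → ZMod 2) → ZMod 2 := fun x => x 0 * x 1 + x 2 * x 3

/-- The quadratic form `v ⊕ v` over `F₂`: two orthogonal copies of the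
discriminant quadratic form of `D₄` (elliptic plane: `q = 1` on all three
nonzero vectors). -/
def qVV : (Fin 4 → ZMod 2) → ZMod 2 := fun x =>
  (x 0 ^ 2 + x 0 * x 1 + x 1 ^ 2) + (x 2 ^ 2 + x 2 * x 3 + x 3 ^ 2)

def fIso : (Fin 4 → ZMod 2) → (Fin 4 → ZMod 2) := fun x =>
  ![x 2 + x 3, x 0 + x 1 + x 3, x 1 + x 2 + x 3, x 0 + x 2 + x 3]

def gIso : (Fin 4 → ZMod 2) → (Fin 4 → ZMod 2) := fun x =>
  ![x 0 + x 3, x 0 + x 2, x 0 + x 1 + x 2 + x 3, x 1 + x 2 + x 3]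

/-- There is an isomorphism of finite quadratic forms `u ⊕ u ≅ v ⊕ v`:
a group automorphism of `(ℤ/2)⁴` carrying the quadratic form `u ⊕ u` to
`v ⊕ v`. -/
theorem uu_iso_vv :
    ∃ f : (Fin 4 → ZMod 2) ≃+ (Fin 4 → ZMod 2), ∀ x, qVV (f x) = qUU x := by
  refine ⟨⟨⟨fIso, gIso, ?_, ?_⟩, ?_⟩, ?_⟩
  · show ∀ x, gIso (fIso x) = x; decide
  · show ∀ x, fIso (gIso x) = x; decide
  · show ∀ x y, fIso (x + y) = fIso x + fIso y; decide
  · show ∀ x, qVV (fIso x) = qUU x; decide
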